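/- Let ψ ∈ D_ℝ and φ = Γ₁[ψ]. Then for every T ∈ [0,∞) and every t ≥ 0, φ(T + t) = Γ₁[φ(T) + ψ^T](t), where φ(T) + ψ^T denotes the function s ↦ φ(T) + ψ(T + s) − ψ(T). -/

import Mathlib

open MeasureTheory Filter Set
open scoped NNReal ENNReal BoundedContinuousFunction Topology

noncomputable section

/-- Càdlàg on `[0,∞)`: right-continuous at every `t ≥ 0`, with left limits at
every `t > 0` (along `[0,t)`). -/
def CadlagOn {E : Type*} [TopologicalSpace E] (f : ℝ → E) : Prop :=
  (∀ t : ℝ, 0 ≤ t → ContinuousWithinAt f (Set.Ici t) t) ∧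
  (∀ t : ℝ, 0 < t → ∃ l : E, Filter.Tendsto f (nhdsWithin t (Set.Ico 0 t)) (nhds l))

/-- `D_ℝ`: real-valued càdlàg paths on `[0,∞)`. -/
def DR (f : ℝ → ℝ) : Prop := CadlagOn f

/-- `D_ℝ^↑`: nonnegative nondecreasing real-valued càdlàg paths on `[0,∞)`. -/
def DRup (f : ℝ → ℝ) : Prop :=
  CadlagOn f ∧ (∀ t : ℝ, 0 ≤ t → 0 ≤ f t) ∧ MonotoneOn f (Set.Ici 0)

/-- `D_M`: càdlàg paths with values in the space of finite nonnegative measures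
on `[0,∞)`, equipped with the topology of weak convergence. -/
def DM (ζ : ℝ → FiniteMeasure ℝ≥0) : Prop := CadlagOn ζ

/-- `D_M^↑`: paths in `D_M` such that `t ↦ ∫ f dζ_t` is nondecreasing for every
nonnegative bounded continuous `f` on `[0,∞)`. -/
def DMup (ζ : ℝ → FiniteMeasure ℝ≥0) : Prop :=
  CadlagOn ζ ∧
  ∀ f : ℝ≥0 →ᵇ ℝ≥0, MonotoneOn (fun t => (ζ t).testAgainstNN f) (Set.Ici 0)

/-- First component of the Skorokhod map on the half-line:
`Γ₁[ψ](t) = ψ(t) − inf_{s∈[0,t]} (ψ(s) ∧ 0)`. -/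
def Gamma1 (ψ : ℝ → ℝ) (t : ℝ) : ℝ :=
  ψ t - sInf ((fun s => min (ψ s) 0) '' Set.Icc 0 t)

/-- Second component of the Skorokhod map on the half-line: `Γ₂[ψ] = Γ₁[ψ] − ψ`. -/
def Gamma2 (ψ : ℝ → ℝ) (t : ℝ) : ℝ := Gamma1 ψ t - ψ t

/-- Extension of `g : [0,∞) → ℝ` by `0` on `(-∞,0)`. -/
def lsExt (g : ℝ → ℝ) : ℝ → ℝ := fun t => if t < 0 then 0 else g t

/- The Lebesgue–Stieltjes measure `m^g(B) = g(0)δ₀(B) + ∫_{(0,∞)} 1_B dg` of a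
nonnegative nondecreasing right-continuous `g` on `[0,∞)`, realized as the
Stieltjes measure of the extension of `g` by `0` on `(-∞,0)`. -/
open scoped Classical in
def lsMeasure (g : ℝ → ℝ) : Measure ℝ :=
  if h : Monotone (lsExt g) ∧ ∀ t, ContinuousWithinAt (lsExt g) (Set.Ici t) t then
    StieltjesFunction.measure ⟨lsExt g, h.1, h.2⟩
  else 0

/-- The measure-valued Skorokhod problem (MVSP): `(ξ,β,ι)` solves the MVSP for
the data `(α,μ)`. -/
def SolvesMVSP (α : ℝ → FiniteMeasure ℝ≥0) (μ : ℝ → ℝ)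
    (ξ β : ℝ → FiniteMeasure ℝ≥0) (ι : ℝ → ℝ) : Prop :=
  (∀ x : ℝ≥0, ∀ t : ℝ, 0 ≤ t →
    (ξ t (Set.Iic x) : ℝ) = (α t (Set.Iic x) : ℝ) - μ t + (β t (Set.Ioi x) : ℝ) + ι t) ∧
  (∀ x : ℝ≥0, ∀ᵐ t ∂(lsMeasure (fun s => (β s (Set.Ioi x) : ℝ))), (ξ t (Set.Iic x) : ℝ) = 0) ∧
  (∀ x : ℝ≥0, ∀ᵐ t ∂(lsMeasure ι), (ξ t (Set.Iic x) : ℝ) = 0) ∧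
  (∀ t : ℝ, 0 ≤ t → (β t Set.univ : ℝ) + ι t = μ t)

/-- System (30): `(ξ,β,ι)` solves the MVSP for `(α, μ+ρ)` and `ξ_t[0,t) = 0`
for every `t > 0`. -/
def Solves30 (α : ℝ → FiniteMeasure ℝ≥0) (μ : ℝ → ℝ)
    (ξ β : ℝ → FiniteMeasure ℝ≥0) (ι ρ : ℝ → ℝ) : Prop :=
  SolvesMVSP α (fun t => μ t + ρ t) ξ β ι ∧
  ∀ t : ℝ, 0 < t → (ξ t (Set.Iio (Real.toNNReal t)) : ℝ) = 0

/-- A minimal solution of system (30): a solution (lying in the appropriate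
path spaces) whose reneging function `ρ` is pointwise below that of any other
solution. -/
def IsMinimalSol30 (α : ℝ → FiniteMeasure ℝ≥0) (μ : ℝ → ℝ)
    (ξ β : ℝ → FiniteMeasure ℝ≥0) (ι ρ : ℝ → ℝ) : Prop :=
  (DM ξ ∧ DMup β ∧ DRup ι ∧ DRup ρ ∧ Solves30 α μ ξ β ι ρ) ∧
  ∀ (ξ' β' : ℝ → FiniteMeasure ℝ≥0) (ι' ρ' : ℝ → ℝ),
    DM ξ' → DMup β' → DRup ι' → DRup ρ' → Solves30 α μ ξ' β' ι' ρ' →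
    ∀ t : ℝ, 0 ≤ t → ρ t ≤ ρ' t

/-- The (topological) support of a finite measure on `[0,∞)`: the set of points
all of whose open neighborhoods have positive measure. -/
def measSupport (ν : FiniteMeasure ℝ≥0) : Set ℝ≥0 :=
  {x : ℝ≥0 | ∀ u : Set ℝ≥0, IsOpen u → x ∈ u → ν u ≠ 0}

/-- `σ(ν) = inf supp[ν]`, with value `∞` when `ν = 0`. -/
def sigmaOf (ν : FiniteMeasure ℝ≥0) : ℝ≥0∞ :=
  sInf ((fun x : ℝ≥0 => (x : ℝ≥0∞)) '' measSupport ν)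

/-- Assumption A on the data `(α,μ)`. -/
def AssumptionA (α : ℝ → FiniteMeasure ℝ≥0) (μ : ℝ → ℝ) : Prop :=
  (∃ (ξ0 : FiniteMeasure ℝ≥0) (a0 : ℝ → FiniteMeasure ℝ≥0)
      (lam : ℝ → ℝ) (ν : FiniteMeasure ℝ≥0),
    (∀ x : ℝ≥0, ξ0 {x} = 0) ∧
    ContinuousOn a0 (Set.Ici 0) ∧ DMup a0 ∧
    (∀ t : ℝ, 0 ≤ t → ∀ x : ℝ≥0, a0 t {x} = 0) ∧
    Measurable lam ∧ (∀ s : ℝ, 0 ≤ s → 0 ≤ lam s) ∧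
    (∀ t : ℝ, 0 ≤ t → α t = a0 t + ξ0) ∧
    (∀ t : ℝ, 0 ≤ t → ∀ x : ℝ≥0, (a0 t (Set.Iic x) : ℝ) =
      ∫ s in Set.Icc (0:ℝ) t,
        (if s ≤ (x:ℝ) then lam s * (ν (Set.Iic (Real.toNNReal ((x:ℝ) - s))) : ℝ) else 0)) ∧
    (∀ t : ℝ, 0 ≤ t →
      Filter.Tendsto (fun x : ℝ≥0 =>
          sSup ((fun s => lam s * (ν (Set.Iic x) : ℝ)) '' Set.Icc (0:ℝ) t))
        (nhdsWithin 0 (Set.Ioi 0)) (nhds 0))) ∧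
  (∃ μ0 m : ℝ → ℝ,
    ContinuousOn μ0 (Set.Ici 0) ∧ (∀ t : ℝ, 0 ≤ t → 0 ≤ μ0 t) ∧
    MonotoneOn μ0 (Set.Ici 0) ∧
    Measurable m ∧ (∀ s : ℝ, 0 ≤ s → 0 ≤ m s) ∧
    (∀ t : ℝ, 0 ≤ t → MeasureTheory.IntegrableOn m (Set.Icc 0 t)) ∧
    (∀ t : ℝ, 0 ≤ t → 0 < sInf (m '' Set.Icc (0:ℝ) t)) ∧
    (∀ t : ℝ, 0 ≤ t → μ t = μ0 t + ∫ s in Set.Icc (0:ℝ) t, m s))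

lemma cadlag_bddBelow (f : ℝ → ℝ) (hf : CadlagOn f) (c : ℝ) :
    BddBelow (f '' Set.Icc 0 c) := by
  rcases lt_or_ge c 0 with hc | hc
  · simp [Set.Icc_eq_empty_of_lt hc]
  have key : ∀ x ∈ Set.Icc (0:ℝ) c, ∃ U ∈ 𝓝 x, BddBelow (f '' (U ∩ Set.Icc 0 c)) := by
    intro x hx
    have h1 : ∀ᶠ y in nhdsWithin x (Set.Ici x), f x - 1 < f y :=
      (hf.1 x hx.1).eventually (eventually_gt_nhds (by linarith))
    have h2 : ∃ M : ℝ, ∀ᶠ y in nhdsWithin x (Set.Ico 0 x), M < f y := by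
      rcases eq_or_lt_of_le hx.1 with h0 | h0
      · refine ⟨0, ?_⟩
        rw [← h0]
        simp [Set.Ico_self]
      · obtain ⟨l, hl⟩ := hf.2 x h0
        exact ⟨l - 1, hl.eventually (eventually_gt_nhds (by linarith))⟩
    obtain ⟨M, hM⟩ := h2
    rw [eventually_nhdsWithin_iff] at h1 hM
    obtain ⟨U, hU, hUP⟩ := Filter.eventually_iff_exists_mem.mp (h1.and hM)
    refine ⟨U, hU, ⟨min (f x - 1) M, ?_⟩⟩
    rintro _ ⟨y, ⟨hyU, hyI⟩, rfl⟩
    rcases le_or_gt x y with hxy | hxy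
    · exact le_trans (min_le_left _ _) ((hUP y hyU).1 hxy).le
    · exact le_trans (min_le_right _ _) ((hUP y hyU).2 ⟨hyI.1, hxy⟩).le
  choose U hU hB using key
  obtain ⟨s, hs⟩ := (isCompact_Icc : IsCompact (Set.Icc (0:ℝ) c)).elim_nhds_subcover' U hU
  have hsub : f '' Set.Icc 0 c ⊆ ⋃ x ∈ s, f '' (U x x.2 ∩ Set.Icc 0 c) := by
    rintro _ ⟨y, hy, rfl⟩
    have mem := hs hy
    simp only [Set.mem_iUnion] at mem ⊢
    obtain ⟨x, hxs, hyU⟩ := mem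
    exact ⟨x, hxs, Set.mem_image_of_mem f ⟨hyU, hy⟩⟩
  refine BddBelow.mono hsub ?_
  exact (Set.Finite.bddBelow_biUnion s.finite_toSet).2 (fun x _ => hB x x.2)

/-- Shift property of the Skorokhod map on the half-line:
`φ(T + t) = Γ₁[φ(T) + ψ^T](t)` for all `T, t ≥ 0`. -/
theorem skorokhod_map_shift
    (ψ : ℝ → ℝ) (hψ : DR ψ) (T : ℝ) (hT : 0 ≤ T) (t : ℝ) (ht : 0 ≤ t) :
    Gamma1 ψ (T + t) = Gamma1 (fun s => Gamma1 ψ T + (ψ (T + s) - ψ T)) t := by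
  simp only [Gamma1]
  set m : ℝ → ℝ := fun s => min (ψ s) 0 with hm
  have hbdd : BddBelow (ψ '' Set.Icc 0 (T + t)) := cadlag_bddBelow ψ hψ (T + t)
  have hbm : BddBelow (m '' Set.Icc 0 (T + t)) := by
    obtain ⟨M, hM⟩ := hbdd
    refine ⟨min M 0, ?_⟩
    rintro _ ⟨y, hy, rfl⟩
    exact min_le_min (hM (Set.mem_image_of_mem ψ hy)) le_rfl
  have hbmT : BddBelow (m '' Set.Icc 0 T) :=
    hbm.mono (Set.image_mono (f := m) (Set.Icc_subset_Icc le_rfl (by linarith)))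
  set a := sInf (m '' Set.Icc 0 T) with ha
  have hane : (m '' Set.Icc 0 T).Nonempty := (Set.nonempty_Icc.2 hT).image m
  have ha0 : a ≤ 0 :=
    le_trans (csInf_le hbmT (Set.mem_image_of_mem m ⟨le_rfl, hT⟩)) (min_le_right _ _)
  set S := (fun u => m (T + u)) '' Set.Icc 0 t with hSdef
  have hSne : S.Nonempty := (Set.nonempty_Icc.2 ht).image _
  have hSeq : S = m '' Set.Icc T (T + t) := by
    rw [show Set.Icc T (T + t) = (fun u => T + u) '' Set.Icc 0 t by
      rw [Set.image_const_add_Icc]; simp]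
    rw [Set.image_image]
  have hSbdd : BddBelow S := by
    rw [hSeq]
    exact hbm.mono (Set.image_mono (f := m) (Set.Icc_subset_Icc hT le_rfl))
  have hunion : m '' Set.Icc 0 (T + t) = (m '' Set.Icc 0 T) ∪ S := by
    rw [hSeq, ← Set.image_union, Set.Icc_union_Icc_eq_Icc hT (by linarith)]
  have hC : sInf (m '' Set.Icc 0 (T + t)) = min a (sInf S) := by
    rw [hunion, csInf_union hbmT hane hSbdd hSne]
  have hptwise : ∀ s ∈ Set.Icc (0:ℝ) t,
      min (ψ T - a + (ψ (T + s) - ψ T)) 0 = min (m (T + s)) a - a := by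
    intro s _
    show min (ψ T - a + (ψ (T + s) - ψ T)) 0 = min (min (ψ (T + s)) 0) a - a
    simp only [min_def]
    split_ifs <;> linarith
  have himg : (fun s => min (ψ T - a + (ψ (T + s) - ψ T)) 0) '' Set.Icc 0 t
      = (fun x => x - a) '' ((fun x => min x a) '' S) := by
    rw [hSdef, Set.image_image, Set.image_image]
    exact Set.image_congr hptwise
  have hS'ne : ((fun x => min x a) '' S).Nonempty := hSne.image _
  have hS'b : BddBelow ((fun x => min x a) '' S) := by
    refine ⟨min (sInf S) a, ?_⟩
    rintro _ ⟨x, hx, rfl⟩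
    exact min_le_min (csInf_le hSbdd hx) le_rfl
  have h1 : min (sInf S) a = sInf ((fun x => min x a) '' S) :=
    Monotone.map_csInf_of_continuousAt
      ((continuous_id.min continuous_const).continuousAt)
      (monotone_id.min monotone_const) hSne hSbdd
  have h2 : sInf ((fun x => min x a) '' S) - a
      = sInf ((fun x => x - a) '' ((fun x => min x a) '' S)) :=
    Monotone.map_csInf_of_continuousAt
      ((continuous_id.sub continuous_const).continuousAt)
      (fun x y h => by simpa using sub_le_sub_right h a) hS'ne hS'b
  rw [hC, himg, ← h2, ← h1, inf_comm a (sInf S)]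
  ring

end
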